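/- For every locally injective simplicial map φ : ℙ¹(ℚ) → ℙ¹(ℚ) of the Farey graph F there exists g ∈ GL(2,ℤ) such that φ(x) = g • x for all x ∈ ℙ¹(ℚ), and g is unique up to sign (if g′ also has this property then g′ = g or g′ = −g). (This is the paper's Corollary 1.2 — simplicial rigidity of the curve complex for locally injective simplicial self-maps — in the case of the surfaces S₁,₁ and S₀,₄, whose curve complex is the Farey complex.) -/

import Mathlib

/-- The projective line over `ℚ`. -/
abbrev P1Q := Projectivization ℚ (Fin 2 → ℚ)

/-- The point of `ℙ¹(ℚ)` with homogeneous integer coordinates `[a : b]`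
(a junk value is returned when `a = b = 0`, which never occurs for primitive vectors). -/
def fareyMk (a b : ℤ) : P1Q :=
  if h : a = 0 ∧ b = 0 then
    Projectivization.mk ℚ ![1, 0] (by
      intro hv
      have h0 := congrFun hv 0
      simp at h0)
  else
    Projectivization.mk ℚ ![(a : ℚ), (b : ℚ)] (by
      intro hv
      have h0 : (a : ℚ) = 0 := by simpa using congrFun hv 0
      have h1 : (b : ℚ) = 0 := by simpa using congrFun hv 1
      exact h ⟨by exact_mod_cast h0, by exact_mod_cast h1⟩)

/-- Two points of `ℙ¹(ℚ)` are related if they are represented by primitive integer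
vectors `(a,b)` and `(c,d)` with `|ad - bc| = 1`. -/
def fareyRel (x y : P1Q) : Prop :=
  ∃ a b c d : ℤ, Int.gcd a b = 1 ∧ Int.gcd c d = 1 ∧ |a * d - b * c| = 1 ∧
    x = fareyMk a b ∧ y = fareyMk c d

/-- The Farey graph on `ℙ¹(ℚ)`. -/
def fareyGraph : SimpleGraph P1Q := SimpleGraph.fromRel fareyRel

/-- The rational matrix associated to an element of `GL(2,ℤ)`. -/
def matQ (g : GL (Fin 2) ℤ) : Matrix (Fin 2) (Fin 2) ℚ :=
  (g : Matrix (Fin 2) (Fin 2) ℤ).map ((↑) : ℤ → ℚ)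

lemma matQ_mul (g h : GL (Fin 2) ℤ) : matQ (g * h) = matQ g * matQ h := by
  simpa [matQ] using
    (RingHom.mapMatrix (Int.castRingHom ℚ)).map_mul (g : Matrix (Fin 2) (Fin 2) ℤ) h

lemma matQ_one : matQ 1 = (1 : Matrix (Fin 2) (Fin 2) ℚ) := by
  simpa [matQ] using (RingHom.mapMatrix (Int.castRingHom ℚ)).map_one

lemma mulVecLin_matQ_injective (g : GL (Fin 2) ℤ) :
    Function.Injective ((matQ g).mulVecLin) := by
  have key : ∀ v : Fin 2 → ℚ, (matQ g⁻¹).mulVecLin ((matQ g).mulVecLin v) = v := by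
    intro v
    rw [Matrix.mulVecLin_apply, Matrix.mulVecLin_apply, Matrix.mulVec_mulVec,
      ← matQ_mul, inv_mul_cancel, matQ_one, Matrix.one_mulVec]
  exact Function.LeftInverse.injective key

/-- The action of `GL(2,ℤ)` on `ℙ¹(ℚ)` by linear action on representative vectors. -/
def fareyAct (g : GL (Fin 2) ℤ) (x : P1Q) : P1Q :=
  Projectivization.map ((matQ g).mulVecLin) (mulVecLin_matQ_injective g) x

/-- A map `φ` is simplicial on `Y ⊆ ℙ¹(ℚ)` with respect to the Farey graph. -/
def FareySimplicial (Y : Set P1Q) (φ : P1Q → P1Q) : Prop :=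
  ∀ y ∈ Y, ∀ z ∈ Y, fareyGraph.Adj y z → fareyGraph.Adj (φ y) (φ z)

/-- The closed star of `y` in `Y`: the set `{y} ∪ {z ∈ Y : z adjacent to y}`. -/
def fareyClosedStar (Y : Set P1Q) (y : P1Q) : Set P1Q :=
  {z ∈ Y | z = y ∨ fareyGraph.Adj y z}

/-- A map `φ` is locally injective on `Y ⊆ ℙ¹(ℚ)` with respect to the Farey graph. -/
def FareyLocallyInjective (Y : Set P1Q) (φ : P1Q → P1Q) : Prop :=
  ∀ y ∈ Y, Set.InjOn φ (fareyClosedStar Y y)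

lemma vecQ_ne_zero {a b : ℤ} (h : ¬(a = 0 ∧ b = 0)) : (![(a:ℚ), (b:ℚ)] : Fin 2 → ℚ) ≠ 0 := by
  intro hv
  have h0 : (a : ℚ) = 0 := by simpa using congrFun hv 0
  have h1 : (b : ℚ) = 0 := by simpa using congrFun hv 1
  exact h ⟨by exact_mod_cast h0, by exact_mod_cast h1⟩

lemma fareyMk_def {a b : ℤ} (h : ¬(a = 0 ∧ b = 0)) :
    fareyMk a b = Projectivization.mk ℚ ![(a:ℚ), (b:ℚ)] (vecQ_ne_zero h) := by
  rw [fareyMk, dif_neg h]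

lemma ne_zero_of_gcd {a b : ℤ} (h : Int.gcd a b = 1) : ¬(a = 0 ∧ b = 0) := by
  rintro ⟨rfl, rfl⟩; simp at h

lemma fareyMk_smul {k a b : ℤ} (hk : k ≠ 0) (hab : ¬(a = 0 ∧ b = 0)) :
    fareyMk (k * a) (k * b) = fareyMk a b := by
  have hab' : ¬(k * a = 0 ∧ k * b = 0) := by
    rintro ⟨h1, h2⟩
    exact hab ⟨by rcases mul_eq_zero.1 h1 with h|h; exacts [absurd h hk, h],
      by rcases mul_eq_zero.1 h2 with h|h; exacts [absurd h hk, h]⟩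
  rw [fareyMk_def hab', fareyMk_def hab]
  rw [Projectivization.mk_eq_mk_iff']
  refine ⟨(k : ℚ), ?_⟩
  ext i
  fin_cases i <;> simp [mul_comm]

lemma fareyMk_neg (a b : ℤ) : fareyMk (-a) (-b) = fareyMk a b := by
  by_cases h : a = 0 ∧ b = 0
  · obtain ⟨rfl, rfl⟩ := h; norm_num
  · simpa using fareyMk_smul (k := -1) (by norm_num) h

lemma fareyMk_exists_rep (x : P1Q) : ∃ a b : ℤ, Int.gcd a b = 1 ∧ x = fareyMk a b := by
  induction x using Projectivization.ind with
  | h v hv =>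
    set p : ℚ := v 0 with hp
    set q : ℚ := v 1 with hq
    -- integer vector
    set A : ℤ := p.num * q.den with hA
    set B : ℤ := q.num * p.den with hB
    have hpq : ¬(A = 0 ∧ B = 0) := by
      rintro ⟨h1, h2⟩
      apply hv
      have hp0 : p = 0 := by
        have := mul_eq_zero.1 h1
        rcases this with h|h
        · exact Rat.num_eq_zero.1 h
        · exact absurd h (by exact_mod_cast q.den_nz)
      have hq0 : q = 0 := by
        rcases mul_eq_zero.1 h2 with h|h
        · exact Rat.num_eq_zero.1 h
        · exact absurd h (by exact_mod_cast p.den_nz)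
      ext i; fin_cases i <;> simp [← hp, ← hq, hp0, hq0]
    set g : ℕ := Int.gcd A B with hg
    have hg0 : g ≠ 0 := by
      rw [hg, Ne, Int.gcd_eq_zero_iff]
      exact hpq
    obtain ⟨a, ha⟩ : (g:ℤ) ∣ A := Int.gcd_dvd_left A B
    obtain ⟨b, hb⟩ : (g:ℤ) ∣ B := Int.gcd_dvd_right A B
    have hgcd : Int.gcd a b = 1 := by
      have h1 : Int.gcd A B = (g:ℤ).natAbs * Int.gcd a b := by
        rw [ha, hb, Int.gcd_mul_left]
      rw [← hg] at h1
      have : (g:ℤ).natAbs = g := Int.natAbs_natCast g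
      rw [this] at h1
      nlinarith [Nat.pos_of_ne_zero hg0]
    refine ⟨a, b, hgcd, ?_⟩
    have hab : ¬(a = 0 ∧ b = 0) := ne_zero_of_gcd hgcd
    rw [fareyMk_def hab, Projectivization.mk_eq_mk_iff']
    have hpd : ((p.den : ℚ)) ≠ 0 := by exact_mod_cast p.den_nz
    have hqd : ((q.den : ℚ)) ≠ 0 := by exact_mod_cast q.den_nz
    have hgq : ((g : ℚ)) ≠ 0 := by exact_mod_cast hg0
    refine ⟨(g : ℚ) / ((p.den : ℚ) * (q.den : ℚ)), ?_⟩
    have hA' : ((g:ℚ)) * (a:ℚ) = (p.num : ℚ) * (q.den : ℚ) := by exact_mod_cast congrArg (fun t : ℤ => (t:ℚ)) ha.symm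
    have hB' : ((g:ℚ)) * (b:ℚ) = (q.num : ℚ) * (p.den : ℚ) := by exact_mod_cast congrArg (fun t : ℤ => (t:ℚ)) hb.symm
    have hpnum : (p.num : ℚ) = p * (p.den : ℚ) := by
      rw [Rat.mul_den_eq_num]
    have hqnum : (q.num : ℚ) = q * (q.den : ℚ) := by
      rw [Rat.mul_den_eq_num]
    ext i
    fin_cases i
    · show (g : ℚ) / ((p.den : ℚ) * (q.den : ℚ)) * (a:ℚ) = v 0
      rw [← hp, div_mul_eq_mul_div, div_eq_iff (mul_ne_zero hpd hqd)]
      linear_combination hA' + (q.den : ℚ) * hpnum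
    · show (g : ℚ) / ((p.den : ℚ) * (q.den : ℚ)) * (b:ℚ) = v 1
      rw [← hq, div_mul_eq_mul_div, div_eq_iff (mul_ne_zero hpd hqd)]
      linear_combination hB' + (p.den : ℚ) * hqnum

lemma fareyMk_inj {a b c d : ℤ} (h1 : Int.gcd a b = 1) (h2 : Int.gcd c d = 1)
    (h : fareyMk a b = fareyMk c d) : (a = c ∧ b = d) ∨ (a = -c ∧ b = -d) := by
  have hab := ne_zero_of_gcd h1
  have hcd := ne_zero_of_gcd h2
  rw [fareyMk_def hab, fareyMk_def hcd, Projectivization.mk_eq_mk_iff'] at h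
  obtain ⟨t, ht⟩ := h
  have h0 : t * (c:ℚ) = a := by simpa using congrFun ht 0
  have h1' : t * (d:ℚ) = b := by simpa using congrFun ht 1
  -- t is an integer ±1
  have hden0 : ((t.den : ℚ)) ≠ 0 := by exact_mod_cast t.den_nz
  have htn : t * (t.den : ℚ) = (t.num : ℚ) := by
    have h := t.num_div_den
    rw [div_eq_iff hden0] at h
    linarith
  have e0 : t.num * c = a * (t.den : ℤ) := by
    have : (t.num : ℚ) * c = (a : ℚ) * (t.den : ℚ) := by
      rw [← htn]; linear_combination (t.den : ℚ) * h0
    exact_mod_cast this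
  have e1 : t.num * d = b * (t.den : ℤ) := by
    have : (t.num : ℚ) * d = (b : ℚ) * (t.den : ℚ) := by
      rw [← htn]; linear_combination (t.den : ℚ) * h1'
    exact_mod_cast this
  have hcop : Int.gcd t.num (t.den : ℤ) = 1 := t.reduced
  have hdc : ((t.den : ℤ)) ∣ c := by
    have hdvd : ((t.den : ℤ)) ∣ t.num * c := ⟨a, by linarith [e0]⟩
    exact Int.dvd_of_dvd_mul_right_of_gcd_one hdvd (by rw [Int.gcd_comm]; exact hcop)
  have hdd : ((t.den : ℤ)) ∣ d := by
    have hdvd : ((t.den : ℤ)) ∣ t.num * d := ⟨b, by linarith [e1]⟩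
    exact Int.dvd_of_dvd_mul_right_of_gcd_one hdvd (by rw [Int.gcd_comm]; exact hcop)
  have hden1 : (t.den : ℤ) = 1 := by
    have hd : ((t.den : ℤ)) ∣ ((Int.gcd c d : ℤ)) := Int.dvd_coe_gcd hdc hdd
    rw [h2] at hd
    have hd' : ((t.den : ℤ)) ∣ (1:ℤ) := by exact_mod_cast hd
    have hpos : (0:ℤ) < (t.den : ℤ) := by exact_mod_cast t.pos
    have := Int.le_of_dvd one_pos hd'
    omega
  set n : ℤ := t.num with hn
  have ea : n * c = a := by rw [e0, hden1, mul_one]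
  have eb : n * d = b := by rw [e1, hden1, mul_one]
  have hgn : n.natAbs * Int.gcd c d = 1 := by
    rw [← Int.gcd_mul_left, ea, eb, h1]
  rw [h2, mul_one] at hgn
  have : n = 1 ∨ n = -1 := by omega
  rcases this with h | h
  · rw [h] at ea eb; left; omega
  · rw [h] at ea eb; right; omega
lemma fareyAdj_iff {a b c d : ℤ} (h1 : Int.gcd a b = 1) (h2 : Int.gcd c d = 1) :
    fareyGraph.Adj (fareyMk a b) (fareyMk c d) ↔ |a * d - b * c| = 1 := by
  have key : ∀ a' b' c' d' : ℤ, Int.gcd a' b' = 1 → Int.gcd c' d' = 1 →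
      fareyMk a b = fareyMk a' b' → fareyMk c d = fareyMk c' d' →
      |a' * d' - b' * c'| = 1 → |a * d - b * c| = 1 := by
    intro a' b' c' d' g1 g2 hx hy hdet
    rcases fareyMk_inj h1 g1 hx with ⟨ha, hb⟩ | ⟨ha, hb⟩ <;>
      rcases fareyMk_inj h2 g2 hy with ⟨hc, hd⟩ | ⟨hc, hd⟩
    · rw [ha, hb, hc, hd]; exact hdet
    · rw [ha, hb, hc, hd, show a' * -d' - b' * -c' = -(a' * d' - b' * c') from by ring,
        abs_neg]; exact hdet
    · rw [ha, hb, hc, hd, show -a' * d' - -b' * c' = -(a' * d' - b' * c') from by ring,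
        abs_neg]; exact hdet
    · rw [ha, hb, hc, hd, show -a' * -d' - -b' * -c' = a' * d' - b' * c' from by ring]
      exact hdet
  constructor
  · intro h
    rw [fareyGraph, SimpleGraph.fromRel_adj] at h
    obtain ⟨hne, h | h⟩ := h
    · obtain ⟨a', b', c', d', g1, g2, hdet, hx, hy⟩ := h
      exact key a' b' c' d' g1 g2 hx hy hdet
    · obtain ⟨a', b', c', d', g1, g2, hdet, hy, hx⟩ := h
      refine key c' d' a' b' g2 g1 hx hy ?_
      rw [← hdet, abs_eq_abs]; right; ring
  · intro hdet
    rw [fareyGraph, SimpleGraph.fromRel_adj]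
    constructor
    · intro heq
      rcases fareyMk_inj h1 h2 heq with ⟨ha, hb⟩ | ⟨ha, hb⟩ <;> rw [ha, hb] at hdet
      · rw [show c * d - d * c = (0:ℤ) by ring] at hdet; simp at hdet
      · rw [show -c * d - -d * c = (0:ℤ) by ring] at hdet; simp at hdet
    · exact Or.inl ⟨a, b, c, d, h1, h2, hdet, rfl, rfl⟩
-- entry notation
lemma gl_inv_vec (g : GL (Fin 2) ℤ) (a b : ℤ) :
    ((g⁻¹ : GL (Fin 2) ℤ) : Matrix (Fin 2) (Fin 2) ℤ).mulVec
      (((g : Matrix (Fin 2) (Fin 2) ℤ)).mulVec ![a, b]) = ![a, b] := by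
  rw [Matrix.mulVec_mulVec]
  have : ((g⁻¹ : GL (Fin 2) ℤ) : Matrix (Fin 2) (Fin 2) ℤ) * g = 1 := by
    have := inv_mul_cancel g
    calc ((g⁻¹ : GL (Fin 2) ℤ) : Matrix (Fin 2) (Fin 2) ℤ) * g
        = ((g⁻¹ * g : GL (Fin 2) ℤ) : Matrix (Fin 2) (Fin 2) ℤ) := by
          simp [Units.val_mul]
      _ = 1 := by rw [this]; rfl
  rw [this, Matrix.one_mulVec]

lemma mulVec_pair (M : Matrix (Fin 2) (Fin 2) ℤ) (a b : ℤ) :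
    M.mulVec ![a, b] = ![M 0 0 * a + M 0 1 * b, M 1 0 * a + M 1 1 * b] := by
  ext i
  fin_cases i <;> simp [Matrix.mulVec, dotProduct, Fin.sum_univ_two]

lemma gl_primitive (g : GL (Fin 2) ℤ) {a b : ℤ} (h : Int.gcd a b = 1) :
    Int.gcd ((g : Matrix (Fin 2) (Fin 2) ℤ) 0 0 * a + (g : Matrix (Fin 2) (Fin 2) ℤ) 0 1 * b)
      ((g : Matrix (Fin 2) (Fin 2) ℤ) 1 0 * a + (g : Matrix (Fin 2) (Fin 2) ℤ) 1 1 * b) = 1 := by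
  set M : Matrix (Fin 2) (Fin 2) ℤ := (g : Matrix (Fin 2) (Fin 2) ℤ) with hM
  set N : Matrix (Fin 2) (Fin 2) ℤ := ((g⁻¹ : GL (Fin 2) ℤ) : Matrix (Fin 2) (Fin 2) ℤ) with hN
  set A : ℤ := M 0 0 * a + M 0 1 * b with hA
  set B : ℤ := M 1 0 * a + M 1 1 * b with hB
  have hv := gl_inv_vec g a b
  rw [mulVec_pair, ← hA, ← hB, mulVec_pair] at hv
  have ha : N 0 0 * A + N 0 1 * B = a := by
    simpa [hN, -Matrix.coe_units_inv] using congrFun hv 0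
  have hb : N 1 0 * A + N 1 1 * B = b := by
    simpa [hN, -Matrix.coe_units_inv] using congrFun hv 1
  rw [← Int.isCoprime_iff_gcd_eq_one] at h ⊢
  obtain ⟨u, v, huv⟩ := h
  exact ⟨u * N 0 0 + v * N 1 0, u * N 0 1 + v * N 1 1, by
    rw [← huv, ← ha, ← hb]; ring⟩

lemma fareyAct_mk (g : GL (Fin 2) ℤ) {a b : ℤ} (h : Int.gcd a b = 1) :
    fareyAct g (fareyMk a b) =
      fareyMk ((g : Matrix (Fin 2) (Fin 2) ℤ) 0 0 * a + (g : Matrix (Fin 2) (Fin 2) ℤ) 0 1 * b)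
        ((g : Matrix (Fin 2) (Fin 2) ℤ) 1 0 * a + (g : Matrix (Fin 2) (Fin 2) ℤ) 1 1 * b) := by
  set M : Matrix (Fin 2) (Fin 2) ℤ := (g : Matrix (Fin 2) (Fin 2) ℤ) with hM
  have hab := ne_zero_of_gcd h
  have hAB := ne_zero_of_gcd (gl_primitive g h)
  rw [fareyMk_def hab, fareyMk_def hAB, fareyAct, Projectivization.map_mk,
    Projectivization.mk_eq_mk_iff']
  refine ⟨1, ?_⟩
  rw [one_smul]
  ext i
  fin_cases i <;>
    simp [matQ, Matrix.mulVecLin_apply, Matrix.mulVec, dotProduct,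
      Fin.sum_univ_two, ← hM] <;> push_cast <;> ring

lemma fareyAct_one (x : P1Q) : fareyAct 1 x = x := by
  obtain ⟨a, b, hg, rfl⟩ := fareyMk_exists_rep x
  rw [fareyAct_mk 1 hg]
  norm_num

lemma fareyAct_mul (g h : GL (Fin 2) ℤ) (x : P1Q) :
    fareyAct (g * h) x = fareyAct g (fareyAct h x) := by
  obtain ⟨a, b, hg, rfl⟩ := fareyMk_exists_rep x
  rw [fareyAct_mk h hg, fareyAct_mk g (gl_primitive h hg), fareyAct_mk (g * h) hg]
  have hmul : ((g * h : GL (Fin 2) ℤ) : Matrix (Fin 2) (Fin 2) ℤ)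
      = (g : Matrix (Fin 2) (Fin 2) ℤ) * (h : Matrix (Fin 2) (Fin 2) ℤ) := rfl
  rw [hmul]
  congr 1 <;> simp [Matrix.mul_apply, Fin.sum_univ_two] <;> ring

lemma fareyAct_inv_cancel (g : GL (Fin 2) ℤ) (x : P1Q) :
    fareyAct g (fareyAct g⁻¹ x) = x := by
  rw [← fareyAct_mul, mul_inv_cancel, fareyAct_one]

lemma gl_det_pm (g : GL (Fin 2) ℤ) :
    (g : Matrix (Fin 2) (Fin 2) ℤ).det = 1 ∨ (g : Matrix (Fin 2) (Fin 2) ℤ).det = -1 := by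
  have h1 : (g : Matrix (Fin 2) (Fin 2) ℤ).det *
      ((g⁻¹ : GL (Fin 2) ℤ) : Matrix (Fin 2) (Fin 2) ℤ).det = 1 := by
    rw [← Matrix.det_mul]
    have : (g : Matrix (Fin 2) (Fin 2) ℤ) * ((g⁻¹ : GL (Fin 2) ℤ) : Matrix (Fin 2) (Fin 2) ℤ)
        = 1 := by
      calc (g : Matrix (Fin 2) (Fin 2) ℤ) * ((g⁻¹ : GL (Fin 2) ℤ) : Matrix (Fin 2) (Fin 2) ℤ)
          = ((g * g⁻¹ : GL (Fin 2) ℤ) : Matrix (Fin 2) (Fin 2) ℤ) := by simp [Units.val_mul]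
        _ = 1 := by rw [mul_inv_cancel]; rfl
    rw [this, Matrix.det_one]
  rcases Int.isUnit_iff.1 (IsUnit.of_mul_eq_one _ h1) with h | h
  · exact Or.inl h
  · exact Or.inr h

lemma fareyAct_adj (g : GL (Fin 2) ℤ) {x y : P1Q} (h : fareyGraph.Adj x y) :
    fareyGraph.Adj (fareyAct g x) (fareyAct g y) := by
  obtain ⟨a, b, h1, rfl⟩ := fareyMk_exists_rep x
  obtain ⟨c, d, h2, rfl⟩ := fareyMk_exists_rep y
  rw [fareyAdj_iff h1 h2] at h
  rw [fareyAct_mk g h1, fareyAct_mk g h2, fareyAdj_iff (gl_primitive g h1) (gl_primitive g h2)]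
  set M : Matrix (Fin 2) (Fin 2) ℤ := (g : Matrix (Fin 2) (Fin 2) ℤ) with hM
  have key : (M 0 0 * a + M 0 1 * b) * (M 1 0 * c + M 1 1 * d)
      - (M 1 0 * a + M 1 1 * b) * (M 0 0 * c + M 0 1 * d)
      = M.det * (a * d - b * c) := by
    rw [Matrix.det_fin_two]; ring
  rw [key, abs_mul, h, mul_one]
  rcases gl_det_pm g with hd | hd <;> rw [← hM] at hd <;> rw [hd] <;> norm_num

lemma gcd_of_det {a b c d : ℤ} (h : a * d - b * c = 1) : Int.gcd a b = 1 := by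
  rw [← Int.isCoprime_iff_gcd_eq_one]
  exact ⟨d, -c, by linarith⟩

lemma common_neighbor {a b c d : ℤ} (h : a * d - b * c = 1) {u : P1Q}
    (h1 : fareyGraph.Adj (fareyMk a b) u) (h2 : fareyGraph.Adj (fareyMk c d) u) :
    u = fareyMk (a + c) (b + d) ∨ u = fareyMk (a - c) (b - d) := by
  have hab : Int.gcd a b = 1 := gcd_of_det h
  have hcd : Int.gcd c d = 1 := gcd_of_det (show c * (-b) - d * (-a) = 1 by linarith)
  obtain ⟨e, f, hef, rfl⟩ := fareyMk_exists_rep u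
  rw [fareyAdj_iff hab hef] at h1
  rw [fareyAdj_iff hcd hef] at h2
  set m : ℤ := e * d - f * c with hm
  set n : ℤ := a * f - b * e with hn
  have he : e = m * a + n * c := by rw [hm, hn]; linear_combination (-e) * h
  have hf : f = m * b + n * d := by rw [hm, hn]; linear_combination (-f) * h
  have hm1 : m = 1 ∨ m = -1 := by
    have : |m| = 1 := by
      rw [hm, ← h2, abs_sub_comm]; congr 1; ring
    rcases abs_eq (by norm_num : (0:ℤ) ≤ 1) |>.1 this with h' | h'
    · exact Or.inl h'
    · exact Or.inr h'
  have hn1 : n = 1 ∨ n = -1 := by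
    have : |n| = 1 := by rw [hn, ← h1]
    rcases abs_eq (by norm_num : (0:ℤ) ≤ 1) |>.1 this with h' | h'
    · exact Or.inl h'
    · exact Or.inr h'
  rcases hm1 with hm' | hm' <;> rcases hn1 with hn' | hn' <;> rw [hm', hn'] at he hf
  · left; rw [he, hf]; congr 1 <;> ring
  · right; rw [he, hf]; congr 1 <;> ring
  · right
    rw [he, hf, show -1 * a + 1 * c = -(a - c) by ring, show -1 * b + 1 * d = -(b - d) by ring,
      fareyMk_neg]
  · left
    rw [he, hf, show -1 * a + -1 * c = -(a + c) by ring, show -1 * b + -1 * d = -(b + d) by ring,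
      fareyMk_neg]
lemma fix_of_triangle {ψ : P1Q → P1Q} (hs : FareySimplicial Set.univ ψ)
    (hl : FareyLocallyInjective Set.univ ψ) {a b c d : ℤ} (h : a * d - b * c = 1)
    (hx : ψ (fareyMk a b) = fareyMk a b) (hy : ψ (fareyMk c d) = fareyMk c d)
    (hz : ψ (fareyMk (a - c) (b - d)) = fareyMk (a - c) (b - d)) :
    ψ (fareyMk (a + c) (b + d)) = fareyMk (a + c) (b + d) := by
  have hab : Int.gcd a b = 1 := gcd_of_det h
  have hcd : Int.gcd c d = 1 := gcd_of_det (show c * (-b) - d * (-a) = 1 by linarith)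
  have hw : Int.gcd (a + c) (b + d) = 1 :=
    gcd_of_det (show (a + c) * d - (b + d) * c = 1 by linarith)
  have hzg : Int.gcd (a - c) (b - d) = 1 :=
    gcd_of_det (show (a - c) * d - (b - d) * c = 1 by linarith)
  have hxw : fareyGraph.Adj (fareyMk a b) (fareyMk (a + c) (b + d)) := by
    rw [fareyAdj_iff hab hw, show a * (b + d) - b * (a + c) = a * d - b * c by ring, h]
    norm_num
  have hyw : fareyGraph.Adj (fareyMk c d) (fareyMk (a + c) (b + d)) := by
    rw [fareyAdj_iff hcd hw, show c * (b + d) - d * (a + c) = -(a * d - b * c) by ring, h]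
    norm_num
  have hxz : fareyGraph.Adj (fareyMk a b) (fareyMk (a - c) (b - d)) := by
    rw [fareyAdj_iff hab hzg, show a * (b - d) - b * (a - c) = -(a * d - b * c) by ring, h]
    norm_num
  have hzw : fareyMk (a - c) (b - d) ≠ fareyMk (a + c) (b + d) := by
    intro he
    rcases fareyMk_inj hzg hw he with ⟨h1', h2'⟩ | ⟨h1', h2'⟩
    · have hc0 : c = 0 := by omega
      have hd0 : d = 0 := by omega
      rw [hc0, hd0] at h; simp at h
    · have ha0 : a = 0 := by omega
      have hb0 : b = 0 := by omega
      rw [ha0, hb0] at h; simp at h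
  -- ψ w is adjacent to x and y
  have haw : fareyGraph.Adj (fareyMk a b) (ψ (fareyMk (a + c) (b + d))) := by
    have := hs _ (Set.mem_univ _) _ (Set.mem_univ _) hxw
    rwa [hx] at this
  have hbw : fareyGraph.Adj (fareyMk c d) (ψ (fareyMk (a + c) (b + d))) := by
    have := hs _ (Set.mem_univ _) _ (Set.mem_univ _) hyw
    rwa [hy] at this
  rcases common_neighbor h haw hbw with hgood | hbad
  · exact hgood
  · -- ψ w = z = ψ z; contradiction with local injectivity at x
    exfalso
    apply hzw
    apply hl (fareyMk a b) (Set.mem_univ _)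
    · exact ⟨Set.mem_univ _, Or.inr hxz⟩
    · exact ⟨Set.mem_univ _, Or.inr hxw⟩
    · rw [hz, hbad]

lemma parents_core {e f : ℤ} (hf : 1 ≤ f) (hef : f < e) (hg : Int.gcd e f = 1) :
    ∃ a b c d : ℤ, a * d - b * c = 1 ∧ a + c = e ∧ b + d = f ∧
      a.natAbs + b.natAbs < e.natAbs + f.natAbs ∧
      c.natAbs + d.natAbs < e.natAbs + f.natAbs ∧
      (a - c).natAbs + (b - d).natAbs < e.natAbs + f.natAbs := by
  rw [← Int.isCoprime_iff_gcd_eq_one] at hg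
  obtain ⟨u, v, huv⟩ := hg
  -- a₀ * f - b₀ * e = 1 with a₀ = v, b₀ = -u
  set a₀ : ℤ := v with ha₀
  set b₀ : ℤ := -u with hb₀
  have hbez : a₀ * f - b₀ * e = 1 := by rw [ha₀, hb₀]; linarith
  set t : ℤ := b₀ / f with ht
  set b : ℤ := b₀ % f with hb
  set a : ℤ := a₀ - t * e with ha
  have hbrange : 0 ≤ b ∧ b < f := ⟨Int.emod_nonneg b₀ (by omega), Int.emod_lt_of_pos b₀ (by omega)⟩
  have hbdef : b = b₀ - t * f := by rw [hb, ht]; rw [Int.emod_def]; ring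
  have hbez2 : a * f - b * e = 1 := by rw [ha, hbdef]; linarith [hbez]
  refine ⟨a, b, e - a, f - b, by linarith [hbez2], by ring, by ring, ?_, ?_, ?_⟩
  -- bounds
  · have ha1 : 1 ≤ a := by nlinarith [hbrange.1, hbrange.2]
    have hae : a ≤ e - 1 := by nlinarith [hbrange.1, hbrange.2]
    omega
  · have ha1 : 1 ≤ a := by nlinarith [hbrange.1, hbrange.2]
    have hae : a ≤ e - 1 := by nlinarith [hbrange.1, hbrange.2]
    omega
  · have ha1 : 1 ≤ a := by nlinarith [hbrange.1, hbrange.2]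
    have hae : a ≤ e - 1 := by nlinarith [hbrange.1, hbrange.2]
    omega

lemma parents_pos {e f : ℤ} (hf : 1 ≤ f) (he : 1 ≤ e) (hne : e ≠ f) (hg : Int.gcd e f = 1) :
    ∃ a b c d : ℤ, a * d - b * c = 1 ∧ a + c = e ∧ b + d = f ∧
      a.natAbs + b.natAbs < e.natAbs + f.natAbs ∧
      c.natAbs + d.natAbs < e.natAbs + f.natAbs ∧
      (a - c).natAbs + (b - d).natAbs < e.natAbs + f.natAbs := by
  rcases lt_or_gt_of_ne hne with hlt | hgt
  · -- e < f : use core on (f, e) and swap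
    obtain ⟨a, b, c, d, hdet, hac, hbd, h1, h2, h3⟩ :=
      parents_core he hlt (by rwa [Int.gcd_comm])
    exact ⟨d, c, b, a, by linarith, by linarith, by linarith, by omega, by omega, by omega⟩
  · exact parents_core hf hgt hg

lemma parents_main {e f : ℤ} (hf : 1 ≤ f) (he : e ≠ 0) (hne : e.natAbs ≠ f.natAbs)
    (hg : Int.gcd e f = 1) :
    ∃ a b c d : ℤ, a * d - b * c = 1 ∧ a + c = e ∧ b + d = f ∧
      a.natAbs + b.natAbs < e.natAbs + f.natAbs ∧
      c.natAbs + d.natAbs < e.natAbs + f.natAbs ∧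
      (a - c).natAbs + (b - d).natAbs < e.natAbs + f.natAbs := by
  rcases lt_or_gt_of_ne he with hneg | hpos
  · -- e < 0 : mirror
    obtain ⟨a, b, c, d, hdet, hac, hbd, h1, h2, h3⟩ :=
      parents_pos (e := -e) (f := f) hf (by omega) (by omega) (by rw [Int.neg_gcd, hg])
    exact ⟨-c, d, -a, b, by linarith, by omega, by omega, by omega, by omega, by omega⟩
  · exact parents_pos hf hpos (by omega) hg

lemma fix_all {ψ : P1Q → P1Q} (hs : FareySimplicial Set.univ ψ)
    (hl : FareyLocallyInjective Set.univ ψ)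
    (h10 : ψ (fareyMk 1 0) = fareyMk 1 0) (h01 : ψ (fareyMk 0 1) = fareyMk 0 1)
    (h11 : ψ (fareyMk 1 1) = fareyMk 1 1) : ∀ x : P1Q, ψ x = x := by
  have hm10 : fareyMk (-1) 0 = fareyMk 1 0 := by
    have := fareyMk_neg 1 0; norm_num at this; exact this
  have key : ∀ n : ℕ, ∀ e f : ℤ, Int.gcd e f = 1 → e.natAbs + f.natAbs ≤ n →
      ψ (fareyMk e f) = fareyMk e f := by
    intro n
    induction n using Nat.strong_induction_on with
    | _ n IH =>
      have main : ∀ e f : ℤ, Int.gcd e f = 1 → e.natAbs + f.natAbs ≤ n → 0 ≤ f →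
          ψ (fareyMk e f) = fareyMk e f := by
        intro e f hg hn hf0
        rcases eq_or_lt_of_le hf0 with hf | hf
        · -- f = 0
          have he : e = 1 ∨ e = -1 := by
            have : e.natAbs = 1 := by
              rw [← hf] at hg; simpa using hg
            omega
          rcases he with rfl | rfl
          · rw [← hf]; exact h10
          · rw [← hf, hm10]; exact h10
        · -- f ≥ 1
          by_cases he0 : e = 0
          · have : f = 1 := by
              subst he0; have : f.natAbs = 1 := by simpa using hg
              omega
            rw [he0, this]; exact h01
          by_cases hne : e.natAbs = f.natAbs
          · -- |e| = |f| = 1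
            have h1 : e.natAbs = 1 := by
              have hdef : Int.gcd e f = Nat.gcd e.natAbs f.natAbs := rfl
              rw [hdef, hne, Nat.gcd_self] at hg
              omega
            have hf1 : f = 1 := by omega
            have he1 : e = 1 ∨ e = -1 := by omega
            rcases he1 with rfl | rfl
            · rw [hf1]; exact h11
            · rw [hf1]
              have hy' : ψ (fareyMk (-1) 0) = fareyMk (-1) 0 := by rw [hm10]; exact h10
              have hz' : ψ (fareyMk ((0:ℤ) - (-1)) ((1:ℤ) - 0)) = fareyMk ((0:ℤ) - (-1)) ((1:ℤ) - 0) := by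
                norm_num; exact h11
              have := fix_of_triangle hs hl (show (0:ℤ) * 0 - 1 * (-1) = 1 by ring) h01 hy' hz'
              norm_num at this
              exact this
          · obtain ⟨a, b, c, d, hdet, hac, hbd, hb1, hb2, hb3⟩ :=
              parents_main (by omega) he0 hne hg
            have hfx : ψ (fareyMk a b) = fareyMk a b := by
              refine IH (a.natAbs + b.natAbs) (by omega) a b (gcd_of_det hdet) le_rfl
            have hfy : ψ (fareyMk c d) = fareyMk c d := by
              refine IH (c.natAbs + d.natAbs) (by omega) c d
                (gcd_of_det (show c * (-b) - d * (-a) = 1 by linarith)) le_rfl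
            have hfz : ψ (fareyMk (a - c) (b - d)) = fareyMk (a - c) (b - d) := by
              refine IH ((a - c).natAbs + (b - d).natAbs) (by omega) _ _
                (gcd_of_det (show (a - c) * d - (b - d) * c = 1 by linarith)) le_rfl
            have := fix_of_triangle hs hl hdet hfx hfy hfz
            rwa [hac, hbd] at this
      intro e f hg hn
      rcases le_or_gt 0 f with hf | hf
      · exact main e f hg hn hf
      · have := main (-e) (-f) (by rw [Int.neg_gcd, Int.gcd_neg]; exact hg)
          (by omega) (by omega)
        rwa [fareyMk_neg] at this
  intro x
  obtain ⟨e, f, hg, rfl⟩ := fareyMk_exists_rep x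
  exact key (e.natAbs + f.natAbs) e f hg le_rfl

def mkGL (p q r s : ℤ) (h : (p * s - q * r) * (p * s - q * r) = 1) : GL (Fin 2) ℤ where
  val := !![p, q; r, s]
  inv := !![(p * s - q * r) * s, -((p * s - q * r) * q);
            -((p * s - q * r) * r), (p * s - q * r) * p]
  val_inv := by
    ext i j
    fin_cases i <;> fin_cases j <;>
      simp [Matrix.mul_apply, Fin.sum_univ_two, Matrix.one_apply] <;>
      first | ring1 | linear_combination h | linear_combination -h
  inv_val := by
    ext i j
    fin_cases i <;> fin_cases j <;>
      simp [Matrix.mul_apply, Fin.sum_univ_two, Matrix.one_apply] <;>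
      first | ring1 | linear_combination h | linear_combination -h

lemma mkGL_val (p q r s : ℤ) (h : (p * s - q * r) * (p * s - q * r) = 1) :
    ((mkGL p q r s h : GL (Fin 2) ℤ) : Matrix (Fin 2) (Fin 2) ℤ) = !![p, q; r, s] := by
  simp [mkGL]

lemma fareyAct_inv_cancel' (g : GL (Fin 2) ℤ) (x : P1Q) :
    fareyAct g⁻¹ (fareyAct g x) = x := by
  rw [← fareyAct_mul, inv_mul_cancel, fareyAct_one]

/-- Corollary 1.2 for the Farey complex: every locally injective
simplicial self-map of the Farey graph is induced by an element of `GL(2,ℤ)`,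
unique up to sign. -/
theorem farey_simplicial_rigidity :
    ∀ φ : P1Q → P1Q,
      FareySimplicial Set.univ φ → FareyLocallyInjective Set.univ φ →
      ∃ g : GL (Fin 2) ℤ,
        (∀ x : P1Q, φ x = fareyAct g x) ∧
        ∀ g' : GL (Fin 2) ℤ, (∀ x : P1Q, φ x = fareyAct g' x) → g' = g ∨ g' = -g := by
  intro φ hs hl
  have g10 : Int.gcd (1:ℤ) 0 = 1 := by norm_num
  have g01 : Int.gcd (0:ℤ) 1 = 1 := by norm_num
  have g11 : Int.gcd (1:ℤ) 1 = 1 := by norm_num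
  have adjA : fareyGraph.Adj (fareyMk 1 0) (fareyMk 0 1) := by
    rw [fareyAdj_iff g10 g01]; norm_num
  have adjB : fareyGraph.Adj (fareyMk 1 0) (fareyMk 1 1) := by
    rw [fareyAdj_iff g10 g11]; norm_num
  have adjC : fareyGraph.Adj (fareyMk 0 1) (fareyMk 1 1) := by
    rw [fareyAdj_iff g01 g11]; norm_num
  obtain ⟨a, b, hab, hA⟩ := fareyMk_exists_rep (φ (fareyMk 1 0))
  obtain ⟨c0, d0, hcd0, hC0⟩ := fareyMk_exists_rep (φ (fareyMk 0 1))
  have adjAC : fareyGraph.Adj (fareyMk a b) (fareyMk c0 d0) := by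
    rw [← hA, ← hC0]; exact hs _ trivial _ trivial adjA
  have hdet0 : |a * d0 - b * c0| = 1 := (fareyAdj_iff hab hcd0).1 adjAC
  obtain ⟨c, d, hcd, hC, hdet⟩ : ∃ c d : ℤ, Int.gcd c d = 1 ∧
      φ (fareyMk 0 1) = fareyMk c d ∧ a * d - b * c = 1 := by
    rcases (abs_eq (by norm_num : (0:ℤ) ≤ 1)).1 hdet0 with h' | h'
    · exact ⟨c0, d0, hcd0, hC0, h'⟩
    · exact ⟨-c0, -d0, by rw [Int.neg_gcd, Int.gcd_neg]; exact hcd0,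
        by rw [fareyMk_neg]; exact hC0, by linarith⟩
  have adjAB : fareyGraph.Adj (fareyMk a b) (φ (fareyMk 1 1)) := by
    rw [← hA]; exact hs _ trivial _ trivial adjB
  have adjCB : fareyGraph.Adj (fareyMk c d) (φ (fareyMk 1 1)) := by
    rw [← hC]; exact hs _ trivial _ trivial adjC
  obtain ⟨c2, d2, hcd2, hC2, hdet2, hB2⟩ : ∃ c2 d2 : ℤ, Int.gcd c2 d2 = 1 ∧
      φ (fareyMk 0 1) = fareyMk c2 d2 ∧ (a * d2 - c2 * b) * (a * d2 - c2 * b) = 1 ∧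
      φ (fareyMk 1 1) = fareyMk (a + c2) (b + d2) := by
    rcases common_neighbor hdet adjAB adjCB with hB | hB
    · exact ⟨c, d, hcd, hC, by nlinarith, hB⟩
    · refine ⟨-c, -d, by rw [Int.neg_gcd, Int.gcd_neg]; exact hcd,
        by rw [fareyMk_neg]; exact hC, by nlinarith, ?_⟩
      rw [show a + -c = a - c by ring, show b + -d = b - d by ring]; exact hB
  have hmain : ∀ x : P1Q, φ x = fareyAct (mkGL a c2 b d2 hdet2) x := by
    set g : GL (Fin 2) ℤ := mkGL a c2 b d2 hdet2 with hgdef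
    have hact10 : fareyAct g (fareyMk 1 0) = fareyMk a b := by
      rw [fareyAct_mk g g10, hgdef, mkGL_val]
      norm_num
    have hact01 : fareyAct g (fareyMk 0 1) = fareyMk c2 d2 := by
      rw [fareyAct_mk g g01, hgdef, mkGL_val]
      norm_num
    have hact11 : fareyAct g (fareyMk 1 1) = fareyMk (a + c2) (b + d2) := by
      rw [fareyAct_mk g g11, hgdef, mkGL_val]
      norm_num
    have hψs : FareySimplicial Set.univ (fun x => fareyAct g⁻¹ (φ x)) :=
      fun y _ z _ h => fareyAct_adj g⁻¹ (hs y trivial z trivial h)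
    have hψl : FareyLocallyInjective Set.univ (fun x => fareyAct g⁻¹ (φ x)) := by
      intro y hy u hu v hv heq
      apply hl y hy hu hv
      have := congrArg (fareyAct g) heq
      simpa [fareyAct_inv_cancel] using this
    have h10 : fareyAct g⁻¹ (φ (fareyMk 1 0)) = fareyMk 1 0 := by
      rw [hA, ← hact10, fareyAct_inv_cancel']
    have h01 : fareyAct g⁻¹ (φ (fareyMk 0 1)) = fareyMk 0 1 := by
      rw [hC2, ← hact01, fareyAct_inv_cancel']
    have h11 : fareyAct g⁻¹ (φ (fareyMk 1 1)) = fareyMk 1 1 := by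
      rw [hB2, ← hact11, fareyAct_inv_cancel']
    have hfix := fix_all hψs hψl h10 h01 h11
    intro x
    have hx := hfix x
    calc φ x = fareyAct g (fareyAct g⁻¹ (φ x)) := (fareyAct_inv_cancel g (φ x)).symm
      _ = fareyAct g x := by rw [hx]
  refine ⟨mkGL a c2 b d2 hdet2, hmain, ?_⟩
  · intro g' hg'
    set g : GL (Fin 2) ℤ := mkGL a c2 b d2 hdet2 with hgdef
    have hacteq : ∀ x, fareyAct g' x = fareyAct g x := fun x => (hg' x).symm.trans (hmain x)
    set M : Matrix (Fin 2) (Fin 2) ℤ := (g : Matrix (Fin 2) (Fin 2) ℤ) with hM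
    set N : Matrix (Fin 2) (Fin 2) ℤ := (g' : Matrix (Fin 2) (Fin 2) ℤ) with hN
    have col1 : Int.gcd (M 0 0) (M 1 0) = 1 := by simpa using gl_primitive g g10
    have col2 : Int.gcd (M 0 1) (M 1 1) = 1 := by simpa using gl_primitive g g01
    have col3 : Int.gcd (M 0 0 + M 0 1) (M 1 0 + M 1 1) = 1 := by
      have := gl_primitive g g11; simpa [mul_one] using this
    have col1' : Int.gcd (N 0 0) (N 1 0) = 1 := by simpa using gl_primitive g' g10
    have col2' : Int.gcd (N 0 1) (N 1 1) = 1 := by simpa using gl_primitive g' g01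
    have col3' : Int.gcd (N 0 0 + N 0 1) (N 1 0 + N 1 1) = 1 := by
      have := gl_primitive g' g11; simpa [mul_one] using this
    have E1 := hacteq (fareyMk 1 0)
    rw [fareyAct_mk g' g10, fareyAct_mk g g10] at E1
    simp only [mul_one, mul_zero, add_zero, ← hM, ← hN] at E1
    have E2 := hacteq (fareyMk 0 1)
    rw [fareyAct_mk g' g01, fareyAct_mk g g01] at E2
    simp only [mul_one, mul_zero, zero_add, ← hM, ← hN] at E2
    have E3 := hacteq (fareyMk 1 1)
    rw [fareyAct_mk g' g11, fareyAct_mk g g11] at E3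
    simp only [mul_one, ← hM, ← hN] at E3
    have F1 := fareyMk_inj col1' col1 E1
    have F2 := fareyMk_inj col2' col2 E2
    have F3 := fareyMk_inj col3' col3 E3
    have nz1 : ¬(M 0 0 = 0 ∧ M 1 0 = 0) := ne_zero_of_gcd col1
    have nz2 : ¬(M 0 1 = 0 ∧ M 1 1 = 0) := ne_zero_of_gcd col2
    have nz3 : ¬(M 0 0 + M 0 1 = 0 ∧ M 1 0 + M 1 1 = 0) := ne_zero_of_gcd col3
    rcases F1 with ⟨e1a, e1b⟩ | ⟨e1a, e1b⟩ <;> rcases F2 with ⟨e2a, e2b⟩ | ⟨e2a, e2b⟩ <;>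
      rcases F3 with ⟨e3a, e3b⟩ | ⟨e3a, e3b⟩
    · left
      apply Units.ext
      show N = M
      ext i j
      fin_cases i <;> fin_cases j
      · exact e1a
      · exact e2a
      · exact e1b
      · exact e2b
    · exact absurd ⟨by omega, by omega⟩ nz3
    · exact absurd ⟨by omega, by omega⟩ nz2
    · exact absurd ⟨by omega, by omega⟩ nz1
    · exact absurd ⟨by omega, by omega⟩ nz1
    · exact absurd ⟨by omega, by omega⟩ nz2
    · exact absurd ⟨by omega, by omega⟩ nz3
    · right
      apply Units.ext
      show N = ((-g : GL (Fin 2) ℤ) : Matrix (Fin 2) (Fin 2) ℤ)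
      rw [Units.val_neg, ← hM]
      ext i j
      fin_cases i <;> fin_cases j <;> simp only [Matrix.neg_apply]
      · exact e1a
      · exact e2a
      · exact e1b
      · exact e2b
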